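/- For a k-sphere S containing u, there exists a linear subspace V of R^n_u such that g_u^{-1}(K|V) = g_u^{-1}(K)|S for all compact convex sets K in R^n_u, i.e., gnomonic projection intertwines orthogonal projection onto linear subspaces of R^n_u with spherical projection onto great subspheres through u. -/

import Mathlib

open scoped RealInnerProductSpace Pointwise
open Real

noncomputable section

/-- `Esp n` is the ambient Euclidean space `ℝ^{n+1}` containing the unit sphere `S^n`. -/
abbrev Esp (n : ℕ) : Type := EuclideanSpace ℝ (Fin (n + 1))

/-- The unit sphere `S^n ⊆ ℝ^{n+1}`. -/
def uSphere (n : ℕ) : Set (Esp n) := {x | ‖x‖ = 1}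

/-- `rad A = {λ • x : λ ≥ 0, x ∈ A}`. -/
def radSet {n : ℕ} (A : Set (Esp n)) : Set (Esp n) :=
  {y | ∃ l : ℝ, 0 ≤ l ∧ ∃ x ∈ A, y = l • x}

/-- A set `A ⊆ S^n` is spherically convex if `rad A` is convex. -/
def SphConvex {n : ℕ} (A : Set (Esp n)) : Prop := Convex ℝ (radSet A)

/-- The open hemisphere centered at `u`. -/
def openHemi {n : ℕ} (u : Esp n) : Set (Esp n) := {v | ‖v‖ = 1 ∧ 0 < ⟪u, v⟫}

/-- The equator `S_u = {v ∈ S^n : u ⬝ v = 0}`. -/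
def equator {n : ℕ} (u : Esp n) : Set (Esp n) := {v | ‖v‖ = 1 ∧ ⟪u, v⟫ = 0}

/-- Proper convex bodies contained in the open hemisphere centered at `u`:
the class `K_u^p(S^n)`. -/
def properBodies {n : ℕ} (u : Esp n) : Set (Set (Esp n)) :=
  {K | K.Nonempty ∧ IsClosed K ∧ K ⊆ openHemi u ∧ SphConvex K}

/-- All proper convex bodies `K^p(S^n)`. -/
def allProperBodies (n : ℕ) : Set (Set (Esp n)) :=
  {K | ∃ u : Esp n, ‖u‖ = 1 ∧ K ∈ properBodies u}

/-- The gnomonic projection `g_u(v) = v/(u⬝v) − u`. -/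
def gno {n : ℕ} (u v : Esp n) : Esp n := (⟪u, v⟫)⁻¹ • v - u

/-- The inverse gnomonic projection `x ↦ (x+u)/‖x+u‖`. -/
def gnoInv {n : ℕ} (u x : Esp n) : Esp n := ‖x + u‖⁻¹ • (x + u)

/-- The hyperplane `ℝ^n_u = u^⊥` of `ℝ^{n+1}`. -/
def hyper {n : ℕ} (u : Esp n) : Set (Esp n) := {x | ⟪u, x⟫ = 0}

/-- The class `K(ℝ^n_u)` of (nonempty) compact convex subsets of the hyperplane `u^⊥`. -/
def cptCvx {n : ℕ} (u : Esp n) : Set (Set (Esp n)) :=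
  {C | C.Nonempty ∧ IsCompact C ∧ Convex ℝ C ∧ C ⊆ hyper u}

/-- The spherical support function `h_u(K,v) = max {sgn(v⬝w) d(u, w|S_{u,v}) : w ∈ K}`,
where `d(u, w|S_{u,v}) = arccos ((u⬝w)/√((u⬝w)² + (v⬝w)²))`. -/
def sphSupp {n : ℕ} (u : Esp n) (K : Set (Esp n)) (v : Esp n) : ℝ :=
  sSup ((fun w => Real.sign ⟪v, w⟫ *
    Real.arccos (⟪u, w⟫ / Real.sqrt (⟪u, w⟫ ^ 2 + ⟪v, w⟫ ^ 2))) '' K)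

/-- The Euclidean support function `h(C,x) = sup {x ⬝ y : y ∈ C}`. -/
def esupp {n : ℕ} (C : Set (Esp n)) (x : Esp n) : ℝ :=
  sSup ((fun y => ⟪x, y⟫) '' C)

/-- Spherical (geodesic) distance on `S^n`. -/
def sphDist {n : ℕ} (x y : Esp n) : ℝ := Real.arccos ⟪x, y⟫

/-- The Hausdorff distance `δ_s` induced by the spherical distance. -/
def sphHaus {n : ℕ} (A B : Set (Esp n)) : ℝ :=
  sInf {r | 0 ≤ r ∧ (∀ a ∈ A, ∃ b ∈ B, sphDist a b ≤ r) ∧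
    (∀ b ∈ B, ∃ a ∈ A, sphDist a b ≤ r)}

/-- The metric `γ_u(K,L) = max_{v ∈ S_u} |h_u(K,v) − h_u(L,v)|`. -/
def gammaU {n : ℕ} (u : Esp n) (K L : Set (Esp n)) : ℝ :=
  sSup ((fun v => |sphSupp u K v - sphSupp u L v|) '' equator u)

/-- Spherical projection of `K` onto the great subsphere `V ∩ S^n`:
`K|S = (rad K | V) ∩ S^n`. -/
def sphProj {n : ℕ} (V : Submodule ℝ (Esp n)) (K : Set (Esp n)) : Set (Esp n) :=
  ((fun x => (Submodule.orthogonalProjection V x : Esp n)) '' radSet K) ∩ uSphere n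

/-- Orthogonal projection of a subset of `ℝ^{n+1}` onto a linear subspace `W`. -/
def eProj {n : ℕ} (W : Submodule ℝ (Esp n)) (C : Set (Esp n)) : Set (Esp n) :=
  (fun x => (Submodule.orthogonalProjection W x : Esp n)) '' C

/-- The spherical convex hull: the intersection of all spherically convex subsets of `S^n`
containing `A`. -/
def sphHull {n : ℕ} (A : Set (Esp n)) : Set (Esp n) :=
  ⋂₀ {B | A ⊆ B ∧ B ⊆ uSphere n ∧ SphConvex B}

/-- The set `C` of pairs of proper convex bodies contained in a common open hemisphere. -/
def pairsC (n : ℕ) : Set (Set (Esp n) × Set (Esp n)) :=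
  {p | ∃ u : Esp n, ‖u‖ = 1 ∧ p.1 ∈ properBodies u ∧ p.2 ∈ properBodies u}

/-- `u`-projection covariance of a binary operation on `K_u^p(S^n)`:
`(K|S) * (L|S) = (K*L)|S` for all great subspheres `S = V ∩ S^n` through `u`
with `0 ≤ k = dim S ≤ n − 1`. -/
def uProjCovariant {n : ℕ} (u : Esp n)
    (op : Set (Esp n) → Set (Esp n) → Set (Esp n)) : Prop :=
  ∀ V : Submodule ℝ (Esp n), u ∈ V → Module.finrank ℝ V ≤ n →
    ∀ K ∈ properBodies u, ∀ L ∈ properBodies u,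
      op (sphProj V K) (sphProj V L) = sphProj V (op K L)

/-- Projection covariance: `u`-projection covariance for every `u ∈ S^n`. -/
def projCovariantC {n : ℕ} (op : Set (Esp n) → Set (Esp n) → Set (Esp n)) : Prop :=
  ∀ u : Esp n, ‖u‖ = 1 → uProjCovariant u op

/-- Projection covariance for operations on compact convex subsets of `u^⊥`. -/
def eProjCovariant {n : ℕ} (u : Esp n)
    (op : Set (Esp n) → Set (Esp n) → Set (Esp n)) : Prop :=
  ∀ W : Submodule ℝ (Esp n), (W : Set (Esp n)) ⊆ hyper u →
    ∀ K ∈ cptCvx u, ∀ L ∈ cptCvx u,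
      op (eProj W K) (eProj W L) = eProj W (op K L)

/-- For every `k`-sphere `S = V ∩ S^n` through `u` there is a linear
subspace `W` of `ℝ^n_u = u^⊥` such that `g_u^{-1}(K|W) = g_u^{-1}(K)|S` for all compact
convex sets `K ⊆ u^⊥`. -/
theorem stmt10 {n : ℕ} (hn : 2 ≤ n) (u : Esp n) (hu : ‖u‖ = 1) (k : ℕ) (hk : k ≤ n - 1)
    (V : Submodule ℝ (Esp n)) (hV : Module.finrank ℝ V = k + 1) (huV : u ∈ V) :
    ∃ W : Submodule ℝ (Esp n), (W : Set (Esp n)) ⊆ hyper u ∧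
      ∀ C ∈ cptCvx u, gnoInv u '' eProj W C = sphProj V (gnoInv u '' C) := by
  set W : Submodule ℝ (Esp n) := V ⊓ (ℝ ∙ u)ᗮ with hW
  have hWh : (W : Set (Esp n)) ⊆ hyper u := by
    intro x hx
    exact Submodule.mem_orthogonal_singleton_iff_inner_right.mp hx.2
  refine ⟨W, hWh, ?_⟩
  intro C hC
  obtain ⟨-, -, -, hCh⟩ := hC
  have hPu : (Submodule.orthogonalProjection V u : Esp n) = u := Submodule.starProjection_eq_self_iff.mpr huV
  have hperp : ∀ x : Esp n, ⟪u, x⟫ = 0 → ⟪u, (Submodule.orthogonalProjection V x : Esp n)⟫ = 0 := by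
    intro x hx
    rw [show ⟪u, (Submodule.orthogonalProjection V x : Esp n)⟫ = ⟪(Submodule.orthogonalProjection V u : Esp n), x⟫ from
      (Submodule.inner_starProjection_left_eq_right V u x).symm, hPu, hx]
  have hWV : ∀ x : Esp n, ⟪u, x⟫ = 0 →
      (Submodule.orthogonalProjection W x : Esp n) = (Submodule.orthogonalProjection V x : Esp n) := by
    intro x hx
    apply Submodule.eq_starProjection_of_mem_of_inner_eq_zero
    · exact ⟨(Submodule.orthogonalProjection V x).2,
        Submodule.mem_orthogonal_singleton_iff_inner_right.mpr (hperp x hx)⟩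
    · intro w hw
      have := (Submodule.sub_starProjection_mem_orthogonal (K := V) x) w hw.1
      rwa [real_inner_comm] at this
  have hnorm : ∀ x : Esp n, ⟪u, x⟫ = 0 → ‖x + u‖ ^ 2 = ‖x‖ ^ 2 + 1 := by
    intro x hx
    rw [norm_add_sq_real, real_inner_comm, hx, hu]
    ring
  have hpos : ∀ x : Esp n, ⟪u, x⟫ = 0 → 0 < ‖x + u‖ := by
    intro x hx
    have h2 := hnorm x hx
    nlinarith [norm_nonneg (x + u), norm_nonneg x, sq_nonneg ‖x‖]
  have hPsmuladd : ∀ (r : ℝ) (x : Esp n),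
      (Submodule.orthogonalProjection V (r • (x + u)) : Esp n)
        = r • ((Submodule.orthogonalProjection V x : Esp n) + u) := by
    intro r x
    rw [map_smul, map_add, Submodule.coe_smul, Submodule.coe_add, hPu]
  ext y
  constructor
  · rintro ⟨-, ⟨c, hc, rfl⟩, rfl⟩
    have hxc : ⟪u, c⟫ = 0 := hCh hc
    set p : Esp n := (Submodule.orthogonalProjection V c : Esp n) with hp
    have hxp : ⟪u, p⟫ = 0 := hperp c hxc
    have hN : 0 < ‖c + u‖ := hpos c hxc
    have hM : 0 < ‖p + u‖ := hpos p hxp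
    show gnoInv u ((Submodule.orthogonalProjection W c : Esp n)) ∈ sphProj V (gnoInv u '' C)
    rw [hWV c hxc, ← hp]
    constructor
    · refine ⟨‖p + u‖⁻¹ • (c + u), ⟨‖p + u‖⁻¹ * ‖c + u‖,
        by positivity, gnoInv u c, ⟨c, hc, rfl⟩, ?_⟩, ?_⟩
      · rw [gnoInv, smul_smul, mul_assoc, mul_inv_cancel₀ hN.ne', mul_one]
      · show (Submodule.orthogonalProjection V (‖p + u‖⁻¹ • (c + u)) : Esp n) = gnoInv u p
        rw [hPsmuladd, gnoInv, ← hp]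
    · show ‖_‖ = 1
      rw [gnoInv, norm_smul, norm_inv, Real.norm_eq_abs, abs_of_pos hM, inv_mul_cancel₀ hM.ne']
  · rintro ⟨⟨z, ⟨l, hl, -, ⟨c, hc, rfl⟩, rfl⟩, rfl⟩, hy⟩
    have hxc : ⟪u, c⟫ = 0 := hCh hc
    set p : Esp n := (Submodule.orthogonalProjection V c : Esp n) with hp
    have hxp : ⟪u, p⟫ = 0 := hperp c hxc
    have hN : 0 < ‖c + u‖ := hpos c hxc
    have hM : 0 < ‖p + u‖ := hpos p hxp
    have hz : l • gnoInv u c = (l * ‖c + u‖⁻¹) • (c + u) := by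
      rw [gnoInv, smul_smul]
    have heq : (Submodule.orthogonalProjection V (l • gnoInv u c) : Esp n)
        = (l * ‖c + u‖⁻¹) • (p + u) := by rw [hz, hPsmuladd, hp]
    have hy1 : ‖(Submodule.orthogonalProjection V (l • gnoInv u c) : Esp n)‖ = 1 := hy
    rw [heq, norm_smul, Real.norm_eq_abs,
      abs_of_nonneg (by positivity)] at hy1
    have hlval : l * ‖c + u‖⁻¹ = ‖p + u‖⁻¹ := by
      field_simp at hy1 ⊢
      linarith
    refine ⟨(Submodule.orthogonalProjection W c : Esp n), ⟨c, hc, rfl⟩, ?_⟩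
    show gnoInv u ((Submodule.orthogonalProjection W c : Esp n))
      = (Submodule.orthogonalProjection V (l • gnoInv u c) : Esp n)
    rw [hWV c hxc, ← hp, gnoInv, heq, hlval]
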